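/- Let α, β be nonzero complex numbers with |α|² + |β|² = 1. Then for every integer n ≥ 1: |α|^{2n}·|β|^{2n−2}·|αβ|·(1−|αβ|) + |αβ|·(1−|αβ|^{2n})/(1+|αβ|) ≤ 1. -/

import Mathlib

/-- For nonzero `α, β` with `|α|² + |β|² = 1` and every `n ≥ 1`:
`|α|^{2n} |β|^{2n−2} |αβ| (1−|αβ|) + |αβ| (1−|αβ|^{2n}) / (1+|αβ|) ≤ 1`. -/
theorem monomial_wsp_inequality (α β : ℂ) (hα : α ≠ 0) (hβ : β ≠ 0)
    (hnorm : ‖α‖ ^ 2 + ‖β‖ ^ 2 = 1) :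
    ∀ n : ℕ, 1 ≤ n →
      ‖α‖ ^ (2 * n) * ‖β‖ ^ (2 * n - 2) *
          (‖α * β‖) * (1 - ‖α * β‖) +
        ‖α * β‖ * (1 - ‖α * β‖ ^ (2 * n)) /
          (1 + ‖α * β‖) ≤ 1 := by
  intro n hn
  set a := ‖α‖ with ha'
  set b := ‖β‖ with hb'
  have ha0 : 0 < a := by simpa [ha'] using (norm_pos_iff.mpr hα)
  have hb0 : 0 < b := by simpa [hb'] using (norm_pos_iff.mpr hβ)
  have ha1 : a ≤ 1 := by nlinarith [sq_nonneg b]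
  have hb1 : b ≤ 1 := by nlinarith [sq_nonneg a]
  have hab : ‖α * β‖ = a * b := by simp [ha', hb']
  rw [hab]
  set c : ℝ := a * b with hc'
  have hc0 : 0 < c := mul_pos ha0 hb0
  have hc1 : c ≤ 1 := by nlinarith
  have hX0 : 0 ≤ a ^ (2 * n) * b ^ (2 * n - 2) := by positivity
  have hX1 : a ^ (2 * n) * b ^ (2 * n - 2) ≤ 1 := by
    have h1 : a ^ (2 * n) ≤ 1 := pow_le_one₀ ha0.le ha1
    have h2 : b ^ (2 * n - 2) ≤ 1 := pow_le_one₀ hb0.le hb1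
    nlinarith [pow_nonneg ha0.le (2*n), pow_nonneg hb0.le (2*n-2)]
  have hY0 : 0 ≤ c ^ (2 * n) := by positivity
  have hY1 : c ^ (2 * n) ≤ 1 := pow_le_one₀ hc0.le hc1
  have hden : (0:ℝ) < 1 + c := by linarith
  have h2 : c * (1 - c ^ (2 * n)) / (1 + c) ≤ c := by
    rw [div_le_iff₀ hden]
    nlinarith
  have h1 : a ^ (2 * n) * b ^ (2 * n - 2) * c * (1 - c) ≤ 1 - c := by
    nlinarith [mul_nonneg (mul_nonneg (sub_nonneg.2 hX1) hc0.le) (sub_nonneg.2 hc1),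
      mul_nonneg hc0.le (sub_nonneg.2 hc1)]
  linarith
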